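/- A finite connected graph G is a tree if and only if, for some (equivalently, every) vertex s of G, there is exactly one s-rooted acyclic orientation of G. -/

import Mathlib

/-- An acyclic orientation of a simple graph: each edge gets exactly one direction,
and there are no directed cycles. -/
structure AcyclicOrientation {V : Type*} (G : SimpleGraph V) where
  dir : V → V → Prop
  adj_of_dir : ∀ a b, dir a b → G.Adj a b
  total : ∀ a b, G.Adj a b → dir a b ∨ dir b a
  asymm : ∀ a b, dir a b → ¬ dir b a
  acyclic : ∀ v, ¬ Relation.TransGen dir v v

/-- `s` is a target: all incident edges are directed towards `s`. -/
def AcyclicOrientation.IsTarget {V : Type*} {G : SimpleGraph V}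
    (o : AcyclicOrientation G) (s : V) : Prop :=
  ∀ a, G.Adj a s → o.dir a s

/-- `s` is a source: all incident edges are directed away from `s`. -/
def AcyclicOrientation.IsSource {V : Type*} {G : SimpleGraph V}
    (o : AcyclicOrientation G) (s : V) : Prop :=
  ∀ a, G.Adj s a → o.dir s a

/-- An `s`-rooted acyclic orientation: `s` is the unique target. -/
def AcyclicOrientation.IsRooted {V : Type*} {G : SimpleGraph V}
    (o : AcyclicOrientation G) (s : V) : Prop :=
  o.IsTarget s ∧ ∀ t, o.IsTarget t → t = s

/-- The number of `s`-rooted acyclic orientations of `G`. -/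
noncomputable def rootedCount {V : Type*} (G : SimpleGraph V) (s : V) : ℕ :=
  Nat.card {o : AcyclicOrientation G // o.IsRooted s}

namespace RootedAux

open SimpleGraph

variable {V : Type*} {G : SimpleGraph V}

lemma AO_ext {o o' : AcyclicOrientation G} (h : o.dir = o'.dir) : o = o' := by
  cases o; cases o'; cases h; rfl

/-! ### Orientations from height functions -/

/-- direction induced by a height function `h` with tiebreak `g`. -/
def mkDir (G : SimpleGraph V) (h g : V → ℕ) (a b : V) : Prop :=
  G.Adj a b ∧ (h b < h a ∨ (h a = h b ∧ g a < g b))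

/-- a decreasing measure for `mkDir`. -/
def mu (h g : V → ℕ) (N : ℕ) (v : V) : ℕ := N * h v + (N - g v)

lemma mu_lt {h g : V → ℕ} {N : ℕ} (hg : ∀ v, g v < N) {a b : V}
    (hd : mkDir G h g a b) : mu h g N b < mu h g N a := by
  have hga := hg a
  have hgb := hg b
  rcases hd.2 with hlt | ⟨heq, hglt⟩
  · have h1 : N * (h b + 1) ≤ N * h a := Nat.mul_le_mul_left N hlt
    rw [Nat.mul_add, Nat.mul_one] at h1
    unfold mu
    omega
  · unfold mu
    rw [heq]
    omega

lemma mu_lt_transGen {h g : V → ℕ} {N : ℕ} (hg : ∀ v, g v < N) {a b : V}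
    (hd : Relation.TransGen (mkDir G h g) a b) : mu h g N b < mu h g N a := by
  induction hd with
  | single h1 => exact mu_lt hg h1
  | tail _ h1 ih => exact lt_trans (mu_lt hg h1) ih

/-- The acyclic orientation induced by a height function with injective tiebreak. -/
def mkO (G : SimpleGraph V) (h g : V → ℕ) (N : ℕ) (hg : ∀ v, g v < N)
    (ginj : Function.Injective g) : AcyclicOrientation G where
  dir := mkDir G h g
  adj_of_dir := fun _ _ hd => hd.1
  total := by
    intro a b hab
    rcases Nat.lt_trichotomy (h a) (h b) with h1 | h1 | h1
    · exact Or.inr ⟨hab.symm, Or.inl h1⟩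
    · rcases Nat.lt_or_ge (g a) (g b) with h2 | h2
      · exact Or.inl ⟨hab, Or.inr ⟨h1, h2⟩⟩
      · have : g b ≠ g a := fun hc => hab.ne' (ginj hc)
        exact Or.inr ⟨hab.symm, Or.inr ⟨h1.symm, lt_of_le_of_ne h2 this⟩⟩
    · exact Or.inl ⟨hab, Or.inl h1⟩
  asymm := by
    intro a b hd hd'
    exact absurd (mu_lt (N := N) hg hd') (not_lt_of_gt (mu_lt hg hd))
  acyclic := fun v hv => lt_irrefl _ (mu_lt_transGen hg hv)

lemma mkO_isRooted (G : SimpleGraph V) (h g : V → ℕ) (N : ℕ) (hg : ∀ v, g v < N)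
    (ginj : Function.Injective g) (s : V)
    (H1 : ∀ v, v ≠ s → ∃ u, G.Adj v u ∧ h u < h v)
    (H2 : ∀ a, G.Adj a s → h s < h a) :
    (mkO G h g N hg ginj).IsRooted s := by
  constructor
  · intro a ha
    exact ⟨ha, Or.inl (H2 a ha)⟩
  · intro t ht
    by_contra hts
    obtain ⟨u, hu, hlt⟩ := H1 t hts
    have h1 : (mkO G h g N hg ginj).dir t u := ⟨hu, Or.inl hlt⟩
    have h2 : (mkO G h g N hg ginj).dir u t := ht u hu.symm
    exact (mkO G h g N hg ginj).asymm t u h1 h2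

/-! ### basic distance facts -/

lemma exists_down (hG : G.Connected) (s : V) {v : V} (hv : v ≠ s) :
    ∃ u, G.Adj v u ∧ G.dist u s < G.dist v s := by
  obtain ⟨p, hp, hl⟩ := hG.exists_path_of_dist v s
  cases p with
  | nil => exact absurd rfl hv
  | cons hadj q =>
      refine ⟨_, hadj, ?_⟩
      have h1 := dist_le q
      simp only [Walk.length_cons] at hl
      omega

lemma adj_dist_le (hG : G.Connected) (s : V) {a b : V} (hab : G.Adj a b) :
    G.dist a s ≤ G.dist b s + 1 := by
  have h1 := hG.dist_triangle (u := a) (v := b) (w := s)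
  have h2 : G.dist a b = 1 := dist_eq_one_iff_adj.mpr hab
  omega

/-! ### uniqueness in trees -/

variable {s : V} {o : AcyclicOrientation G}

lemma out_edge (ho : o.IsRooted s) {v : V} (hv : v ≠ s) : ∃ u, o.dir v u := by
  by_contra hc
  push_neg at hc
  refine hv (ho.2 v ?_)
  intro a ha
  rcases o.total a v ha with h1 | h1
  · exact h1
  · exact absurd h1 (hc a)

lemma to_s [Finite V] (ho : o.IsRooted s) :
    ∀ v, ∃ p : G.Walk v s, ∀ d ∈ p.darts, o.dir d.toProd.1 d.toProd.2 := by
  have key : ∀ (n : ℕ) (v : V), {u | Relation.TransGen o.dir v u}.ncard ≤ n →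
      ∃ p : G.Walk v s, ∀ d ∈ p.darts, o.dir d.toProd.1 d.toProd.2 := by
    intro n
    induction n with
    | zero =>
        intro v hn
        by_cases hv : v = s
        · subst hv; exact ⟨Walk.nil, by simp⟩
        · obtain ⟨u, hu⟩ := out_edge ho hv
          have : u ∈ {u | Relation.TransGen o.dir v u} := Relation.TransGen.single hu
          have hpos : 0 < {u | Relation.TransGen o.dir v u}.ncard :=
            Set.Nonempty.ncard_pos (Set.toFinite _) ⟨u, this⟩
          omega
    | succ n ih =>
        intro v hn
        by_cases hv : v = s
        · subst hv; exact ⟨Walk.nil, by simp⟩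
        · obtain ⟨u, hu⟩ := out_edge ho hv
          have hss : {w | Relation.TransGen o.dir u w} ⊂ {w | Relation.TransGen o.dir v w} := by
            constructor
            · intro w hw
              exact (Relation.TransGen.single hu).trans hw
            · intro hsub
              exact o.acyclic u (hsub (Relation.TransGen.single hu))
          have hlt := Set.ncard_lt_ncard hss (Set.toFinite _)
          obtain ⟨p, hp⟩ := ih u (by omega)
          refine ⟨Walk.cons (o.adj_of_dir _ _ hu) p, ?_⟩
          intro d hd
          rw [Walk.darts_cons, List.mem_cons] at hd
          rcases hd with rfl | hd
          · exact hu
          · exact hp d hd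
  exact fun v => key _ v le_rfl

lemma dwalk_chain {u w : V} (p : G.Walk u w)
    (hp : ∀ d ∈ p.darts, o.dir d.toProd.1 d.toProd.2) : List.Chain' o.dir p.support := by
  induction p with
  | nil => exact List.isChain_singleton _
  | cons hadj q ih =>
      rename_i a b c
      rw [Walk.support_cons, q.support_eq_cons, List.Chain', List.isChain_cons_cons, ← q.support_eq_cons]
      constructor
      · exact hp ⟨(a, b), hadj⟩ (by rw [Walk.darts_cons]; exact List.mem_cons_self)
      · exact ih fun d hd => hp d (by rw [Walk.darts_cons]; exact List.mem_cons_of_mem _ hd)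

lemma dwalk_isPath {u w : V} (p : G.Walk u w)
    (hp : ∀ d ∈ p.darts, o.dir d.toProd.1 d.toProd.2) : p.IsPath := by
  apply Walk.IsPath.mk'
  have hc : List.Chain' (Relation.TransGen o.dir) p.support :=
    List.IsChain.imp (fun a b h => Relation.TransGen.single h) (dwalk_chain p hp)
  haveI : IsTrans V (Relation.TransGen o.dir) := ⟨fun _ _ _ h1 h2 => h1.trans h2⟩
  rw [List.Chain', List.isChain_iff_pairwise] at hc
  exact hc.imp fun {a b} hab => by rintro rfl; exact o.acyclic _ hab

lemma tree_path_length (hT : G.IsTree) {a b : V} (p : G.Walk a b) (hp : p.IsPath) :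
    p.length = G.dist a b := by
  obtain ⟨q, hq, hql⟩ := hT.isConnected.exists_path_of_dist a b
  rw [(hT.existsUnique_path a b).unique hp hq, hql]

lemma support_dist_le {v w : V} (p : G.Walk v s) (hw : w ∈ p.support) :
    G.dist w s ≤ p.length := by
  classical
  exact (dist_le (p.dropUntil w hw)).trans (p.length_dropUntil_le hw)

lemma adj_dist_ne (hT : G.IsTree) (s : V) {a b : V} (hab : G.Adj a b) :
    G.dist a s ≠ G.dist b s := by
  classical
  intro heq
  obtain ⟨p, hp, hl⟩ := hT.isConnected.exists_path_of_dist a s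
  by_cases hb : b ∈ p.support
  · have ht : (p.takeUntil b hb).length = G.dist a b := tree_path_length hT _ (hp.takeUntil hb)
    have hd : (p.dropUntil b hb).length = G.dist b s := tree_path_length hT _ (hp.dropUntil hb)
    have hspec : (p.takeUntil b hb).append (p.dropUntil b hb) = p := p.take_spec hb
    have hlen : (p.takeUntil b hb).length + (p.dropUntil b hb).length = p.length := by
      rw [← Walk.length_append, hspec]
    have hone : G.dist a b = 1 := dist_eq_one_iff_adj.mpr hab
    omega
  · have hq : (Walk.cons hab.symm p).IsPath := hp.cons hb
    have := tree_path_length hT _ hq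
    rw [Walk.length_cons, hl] at this
    omega

lemma dir_dist [Finite V] (hT : G.IsTree) (ho : o.IsRooted s) {v u : V} (hd : o.dir v u) :
    G.dist v s = G.dist u s + 1 := by
  have hadj : G.Adj v u := o.adj_of_dir _ _ hd
  have hG := hT.isConnected
  have h1 := adj_dist_le hG s hadj
  have h2 := adj_dist_le hG s hadj.symm
  have hne := adj_dist_ne hT s hadj
  have hcase : G.dist u s ≠ G.dist v s + 1 := by
    intro hgt
    obtain ⟨p, hpd⟩ := to_s ho u
    have hpp : p.IsPath := dwalk_isPath p hpd
    have hpl : p.length = G.dist u s := tree_path_length hT p hpp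
    obtain ⟨r, hrd⟩ := to_s ho v
    have hrp : r.IsPath := dwalk_isPath r hrd
    have hrl : r.length = G.dist v s := tree_path_length hT r hrp
    have hunot : u ∉ r.support := by
      intro hu
      have := support_dist_le r hu
      omega
    have hq : (Walk.cons hadj.symm r).IsPath := hrp.cons hunot
    have hpq : p = Walk.cons hadj.symm r := (hT.existsUnique_path u s).unique hpp hq
    have hmem : (⟨(u, v), hadj.symm⟩ : G.Dart) ∈ p.darts := by
      rw [hpq, Walk.darts_cons]; exact List.mem_cons_self
    exact o.asymm v u hd (hpd _ hmem)
  omega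

lemma rooted_unique [Finite V] (hT : G.IsTree) {o o' : AcyclicOrientation G}
    (ho : o.IsRooted s) (ho' : o'.IsRooted s) : o = o' := by
  have key : ∀ (oo : AcyclicOrientation G), oo.IsRooted s → ∀ a b,
      oo.dir a b ↔ (G.Adj a b ∧ G.dist a s = G.dist b s + 1) := by
    intro oo hoo a b
    constructor
    · intro hd
      exact ⟨oo.adj_of_dir _ _ hd, dir_dist hT hoo hd⟩
    · rintro ⟨hadj, hdist⟩
      rcases oo.total a b hadj with h1 | h1
      · exact h1
      · have := dir_dist hT hoo h1
        omega
  apply AO_ext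
  funext a b
  exact propext ((key o ho a b).trans (key o' ho' a b).symm)

/-! ### the "forced up" set for the non-tree case -/

inductive SS (G : SimpleGraph V) (s x : V) : V → Prop
  | base : SS G s x x
  | step (v : V) (hv : v ≠ s)
      (h : ∀ u, G.Adj v u → G.dist u s < G.dist v s → SS G s x u) : SS G s x v

lemma SS_dist (hG : G.Connected) {s x v : V} (hv : SS G s x v) :
    G.dist x s ≤ G.dist v s ∧ (v ≠ x → G.dist x s < G.dist v s) := by
  induction hv with
  | base => exact ⟨le_rfl, fun h => absurd rfl h⟩
  | step v hv hall ih =>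
      obtain ⟨u, hu, hdu⟩ := exists_down hG s hv
      have h1 := ih u hu hdu
      rcases eq_or_ne u x with rfl | hux
      · exact ⟨le_of_lt hdu, fun _ => hdu⟩
      · have := (h1.2 hux)
        exact ⟨by omega, fun _ => by omega⟩

/-! ### last edge of a walk -/

lemma last_edge {a b : V} (r : G.Walk a b) (hr : ¬ r.Nil) :
    ∃ y, y ∈ r.support ∧ G.Adj y b ∧ s(y, b) ∈ r.edges := by
  induction r with
  | nil => simp at hr
  | cons hadj q ih =>
      by_cases hq : q.Nil
      · cases q with
        | nil => exact ⟨_, by simp, hadj, by simp⟩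
        | cons _ _ => exact absurd hq Walk.not_nil_cons
      · obtain ⟨y, hy1, hy2, hy3⟩ := ih hq
        exact ⟨y, by rw [Walk.support_cons]; exact List.mem_cons_of_mem _ hy1, hy2,
          by rw [Walk.edges_cons]; exact List.mem_cons_of_mem _ hy3⟩

end RootedAux

open SimpleGraph RootedAux in
/-- A finite connected graph is a tree iff for some (equivalently, every) vertex `s`
it has exactly one `s`-rooted acyclic orientation. -/
theorem isTree_iff_rootedCount_eq_one {V : Type*} [Finite V] (G : SimpleGraph V)
    (hG : G.Connected) :
    (G.IsTree ↔ ∀ s : V, rootedCount G s = 1) ∧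
    (G.IsTree ↔ ∃ s : V, rootedCount G s = 1) := by
  classical
  haveI : Nonempty V := hG.nonempty
  obtain ⟨n, ⟨e⟩⟩ := Finite.exists_equiv_fin V
  set g : V → ℕ := fun v => (e v : ℕ) with hgdef
  have hgN : ∀ v, g v < n := fun v => (e v).isLt
  have hginj : Function.Injective g := fun a b h => e.injective (Fin.val_injective h)
  -- existence of a rooted orientation for every s
  have hH1 : ∀ s : V, ∀ v, v ≠ s → ∃ u, G.Adj v u ∧ G.dist u s < G.dist v s :=
    fun s v hv => exists_down hG s hv
  have hH2 : ∀ s : V, ∀ a, G.Adj a s → G.dist s s < G.dist a s := by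
    intro s a ha
    rw [SimpleGraph.dist_self]
    exact hG.pos_dist_of_ne ha.ne
  have hexists : ∀ s : V, ∃ o : AcyclicOrientation G, o.IsRooted s := by
    intro s
    exact ⟨mkO G (fun v => G.dist v s) g n hgN hginj,
      mkO_isRooted G _ g n hgN hginj s (hH1 s) (hH2 s)⟩
  -- tree implies count = 1
  have htree : G.IsTree → ∀ s : V, rootedCount G s = 1 := by
    intro hT s
    rw [rootedCount, Nat.card_eq_one_iff_unique]
    constructor
    · exact ⟨fun a b => Subtype.ext (rooted_unique hT a.2 b.2)⟩
    · obtain ⟨o, ho⟩ := hexists s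
      exact ⟨⟨o, ho⟩⟩
  -- non-tree implies count ≠ 1
  have hnontree : ¬ G.IsTree → ∀ s : V, rootedCount G s ≠ 1 := by
    intro hnT s h1
    have hsub : Subsingleton {o : AcyclicOrientation G // o.IsRooted s} :=
      (Nat.card_eq_one_iff_unique.mp h1).1
    -- derive two distinct rooted orientations
    by_cases htie : ∃ x y, G.Adj x y ∧ G.dist x s = G.dist y s
    · obtain ⟨x, y, hxy, hd⟩ := htie
      set g2 : V → ℕ := fun v => g (Equiv.swap x y v) with hg2def
      have hg2N : ∀ v, g2 v < n := fun v => hgN _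
      have hg2inj : Function.Injective g2 := hginj.comp (Equiv.swap x y).injective
      set o1 := mkO G (fun v => G.dist v s) g n hgN hginj with ho1def
      set o2 := mkO G (fun v => G.dist v s) g2 n hg2N hg2inj with ho2def
      have hr1 : o1.IsRooted s := mkO_isRooted G _ g n hgN hginj s (hH1 s) (hH2 s)
      have hr2 : o2.IsRooted s := mkO_isRooted G _ g2 n hg2N hg2inj s (hH1 s) (hH2 s)
      have heq : o1 = o2 := by
        have := hsub.elim (⟨o1, hr1⟩ : {o : AcyclicOrientation G // o.IsRooted s}) ⟨o2, hr2⟩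
        exact congrArg Subtype.val this
      have hg2x : g2 x = g y := by rw [hg2def]; simp
      have hg2y : g2 y = g x := by rw [hg2def]; simp
      rcases o1.total x y hxy with hdir | hdir
      · have hdir2 : o2.dir x y := heq ▸ hdir
        have hc1 : g x < g y := by
          rcases hdir.2 with h | h
          · dsimp only at h; omega
          · exact h.2
        have hc2 : g2 x < g2 y := by
          rcases hdir2.2 with h | h
          · dsimp only at h; omega
          · exact h.2
        omega
      · have hdir2 : o2.dir y x := heq ▸ hdir
        have hc1 : g y < g x := by
          rcases hdir.2 with h | h
          · dsimp only at h; omega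
          · exact h.2
        have hc2 : g2 y < g2 x := by
          rcases hdir2.2 with h | h
          · dsimp only at h; omega
          · exact h.2
        omega
    · push_neg at htie
      -- all adjacent pairs have distinct distances; find a cycle
      have hnacyc : ¬ G.IsAcyclic := by
        intro hacyc
        exact hnT ⟨hG, hacyc⟩
      rw [SimpleGraph.IsAcyclic] at hnacyc
      push_neg at hnacyc
      obtain ⟨v, c, hc⟩ := hnacyc
      -- w : max distance vertex on the cycle
      obtain ⟨w, hwmem, hwmax⟩ := c.support.toFinset.exists_max_image (fun y => G.dist y s)
        ⟨v, by simp [c.start_mem_support]⟩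
      rw [List.mem_toFinset] at hwmem
      have hwmax' : ∀ y ∈ c.support, G.dist y s ≤ G.dist w s := by
        intro y hy
        exact hwmax y (by rwa [List.mem_toFinset])
      set q := c.rotate w hwmem with hqdef
      have hq : q.IsCycle := hc.rotate hwmem
      have hqsup : ∀ y ∈ q.support, G.dist y s ≤ G.dist w s := by
        intro y hy
        rw [q.support_eq_cons, List.mem_cons] at hy
        rcases hy with rfl | hy
        · exact le_rfl
        · have hperm := c.support_rotate w hwmem
          rw [hqdef] at hy
          have : y ∈ c.support.tail := hperm.mem_iff.mp hy
          exact hwmax' y (List.mem_of_mem_tail this)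
      clear_value q
      cases q with
      | nil => exact absurd hq (by intro h; exact (Walk.IsCycle.not_nil h) (by simp))
      | @cons _ x _ hadj r =>
        -- x is adjacent to w, on the cycle
        have hlen : 3 ≤ r.length + 1 := by
          have := hq.three_le_length
          simpa using this
        have hrnil : ¬ r.Nil := by
          rw [Walk.nil_iff_length_eq]
          omega
        obtain ⟨x', hx'sup, hx'adj, hx'edge⟩ := last_edge r hrnil
        have hxx' : x' ≠ x := by
          rintro rfl
          have hnodup : (Walk.cons hadj r).edges.Nodup := hq.1.1.edges_nodup
          rw [Walk.edges_cons] at hnodup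
          have : s(w, x') ∉ r.edges := (List.nodup_cons.mp hnodup).1
          rw [Sym2.eq_swap] at this
          exact this hx'edge
        -- distances
        have hxsup : x ∈ (Walk.cons hadj r).support := by
          rw [Walk.support_cons]
          exact List.mem_cons_of_mem _ r.start_mem_support
        have hx'sup2 : x' ∈ (Walk.cons hadj r).support := by
          rw [Walk.support_cons]
          exact List.mem_cons_of_mem _ hx'sup
        have hdx : G.dist x s < G.dist w s :=
          lt_of_le_of_ne (hqsup x hxsup) (htie x w hadj.symm)
        have hdx' : G.dist x' s < G.dist w s :=
          lt_of_le_of_ne (hqsup x' hx'sup2) (htie x' w hx'adj)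
        have hdxe : G.dist x s + 1 = G.dist w s := by
          have := adj_dist_le hG s hadj
          omega
        have hdx'e : G.dist x' s + 1 = G.dist w s := by
          have := adj_dist_le hG s hx'adj.symm
          omega
        have hxs : x ≠ s := by
          rintro rfl
          have h0 : G.dist x' x = 0 := by
            rw [SimpleGraph.dist_self] at hdxe
            omega
          exact hxx' (hG.dist_eq_zero_iff.mp h0)
        -- the forced-up set based at x
        have hsS : ¬ SS G s x s := by
          intro hs
          have := SS_dist hG hs
          rw [SimpleGraph.dist_self] at this
          have hxdpos : 0 < G.dist x s := hG.pos_dist_of_ne hxs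
          omega
        have hx'S : ¬ SS G s x x' := by
          intro hs
          have := (SS_dist hG hs).2 hxx'
          omega
        have hwS : ¬ SS G s x w := by
          intro hs
          cases hs with
          | base => omega
          | step _ hv hall => exact hx'S (hall x' hx'adj.symm hdx')
        set h' : V → ℕ := fun u => if SS G s x u then G.dist u s + 2 else G.dist u s with hh'def
        have hh'le : ∀ u, G.dist u s ≤ h' u ∧ h' u ≤ G.dist u s + 2 := by
          intro u
          rw [hh'def]
          dsimp only
          split <;> omega
        have hH1' : ∀ u, u ≠ s → ∃ z, G.Adj u z ∧ h' z < h' u := by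
          intro u hu
          by_cases huS : SS G s x u
          · obtain ⟨z, hz, hdz⟩ := exists_down hG s hu
            refine ⟨z, hz, ?_⟩
            have h1 := (hh'le z).2
            have h2 : h' u = G.dist u s + 2 := by rw [hh'def]; dsimp only; simp [huS]
            omega
          · have : ¬ (∀ z, G.Adj u z → G.dist z s < G.dist u s → SS G s x z) := by
              intro hall
              exact huS (SS.step u hu hall)
            push_neg at this
            obtain ⟨z, hz1, hz2, hz3⟩ := this
            refine ⟨z, hz1, ?_⟩
            have h1 : h' z = G.dist z s := by rw [hh'def]; dsimp only; simp [hz3]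
            have h2 : h' u = G.dist u s := by rw [hh'def]; dsimp only; simp [huS]
            omega
        have hH2' : ∀ a, G.Adj a s → h' s < h' a := by
          intro a ha
          have h1 : h' s = 0 := by rw [hh'def]; dsimp only; simp [hsS, SimpleGraph.dist_self]
          have h2 := (hh'le a).1
          have h3 : 0 < G.dist a s := hG.pos_dist_of_ne ha.ne
          omega
        set o1 := mkO G (fun v => G.dist v s) g n hgN hginj with ho1def
        set o2 := mkO G h' g n hgN hginj with ho2def
        have hr1 : o1.IsRooted s := mkO_isRooted G _ g n hgN hginj s (hH1 s) (hH2 s)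
        have hr2 : o2.IsRooted s := mkO_isRooted G h' g n hgN hginj s hH1' hH2'
        have heq : o1 = o2 := by
          have := hsub.elim (⟨o1, hr1⟩ : {o : AcyclicOrientation G // o.IsRooted s}) ⟨o2, hr2⟩
          exact congrArg Subtype.val this
        have hd1 : o1.dir w x := ⟨hadj, Or.inl hdx⟩
        have hd2 : o2.dir x w := by
          refine ⟨hadj.symm, Or.inl ?_⟩
          have h1 : h' w = G.dist w s := by rw [hh'def]; dsimp only; simp [hwS]
          have h2 : h' x = G.dist x s + 2 := by rw [hh'def]; dsimp only; simp [SS.base]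
          omega
        exact o2.asymm x w hd2 (heq ▸ hd1)
  refine ⟨⟨htree, ?_⟩, ⟨fun hT => ⟨Classical.arbitrary V, htree hT _⟩, ?_⟩⟩
  · intro h
    by_contra hnT
    exact hnontree hnT (Classical.arbitrary V) (h _)
  · rintro ⟨s, hs⟩
    by_contra hnT
    exact hnontree hnT s hs
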